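/- Let H=(V,E,W) be a connected finite hypergraph, p>1, L⊆V nonempty with labels y:L→ℝ. Then the simplified hypergraph p-Laplacian equation admits a unique solution: there exists exactly one u:V→ℝ with L^p_H u(x_i)=0 for all x_i∈V∖L and u(x_i)=y_i for all x_i∈L; moreover this solution satisfies min_{x_j∈L}y_j ≤ u(x_i) ≤ max_{x_j∈L}y_j for every x_i∈V. -/

import Mathlib

open Finset

/-- A finite hypergraph on vertex set `V` with `m` hyperedges:
each hyperedge is a nonempty finite set of vertices and carries a positive weight. -/
structure FinHypergraph (V : Type*) [Fintype V] (m : ℕ) where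
  e : Fin m → Finset V
  w : Fin m → ℝ
  e_nonempty : ∀ k, (e k).Nonempty
  w_pos : ∀ k, 0 < w k

variable {V : Type*} [Fintype V] {m : ℕ}

/-- Maximal oscillation of `u` on the hyperedge `e k`:
`max_{x_i, x_j ∈ e_k} |u x_i - u x_j|`. -/
noncomputable def osc (H : FinHypergraph V m) (u : V → ℝ) (k : Fin m) : ℝ :=
  (H.e k ×ˢ H.e k).sup' ((H.e_nonempty k).product (H.e_nonempty k))
    (fun q => |u q.1 - u q.2|)

/-- The hypergraph p-Laplacian regularizer
`F_H(u) = ∑ k w_k (max_{x_i,x_j ∈ e_k} |u x_i - u x_j|)^p`. -/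
noncomputable def FH (H : FinHypergraph V m) (p : ℝ) (u : V → ℝ) : ℝ :=
  ∑ k : Fin m, H.w k * (osc H u k) ^ p

/-- `u` is admissible for the labeled set `L` with labels `y`. -/
def Admissible (L : Finset V) (y u : V → ℝ) : Prop := ∀ x ∈ L, u x = y x

/-- `u` is a minimizer of the constrained functional `F_H^{con}`. -/
def IsMinimizer (H : FinHypergraph V m) (p : ℝ) (L : Finset V) (y u : V → ℝ) : Prop :=
  Admissible L y u ∧ ∀ v : V → ℝ, Admissible L y v → FH H p u ≤ FH H p v

/-- Connectivity of a hypergraph: any two vertices are linked by a chain of hyperedges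
with consecutive nonempty intersections. -/
def FinHypergraph.Connected [DecidableEq V] (H : FinHypergraph V m) : Prop :=
  ∀ x y : V, ∃ l : ℕ, ∃ ks : Fin (l + 1) → Fin m,
    x ∈ H.e (ks 0) ∧ y ∈ H.e (ks (Fin.last l)) ∧
    ∀ i : Fin l, (H.e (ks i.castSucc) ∩ H.e (ks i.succ)).Nonempty

/-- The set `D(u)` of vertices whose values are rigid: labeled vertices together with the
unlabeled vertices at which every sufficiently small perturbation strictly increases `F_H`. -/
def Dset [DecidableEq V] (H : FinHypergraph V m) (p : ℝ) (L : Finset V) (u : V → ℝ) : Set V :=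
  {x | x ∈ L ∨ (x ∉ L ∧ ∃ δ > (0 : ℝ), ∀ ε : ℝ, 0 < |ε| → |ε| < δ →
    FH H p u < FH H p (Function.update u x (u x + ε)))}

/-- φ_p(s) = |s|^{p-2} s for s ≠ 0 and φ_p(0) = 0. -/
noncomputable def phiP (p s : ℝ) : ℝ := if s = 0 then 0 else |s| ^ (p - 2) * s

/-- The simplified hypergraph p-Laplacian operator. -/
noncomputable def LpH [DecidableEq V] (H : FinHypergraph V m) (p : ℝ) (u : V → ℝ) (x : V) : ℝ :=
  ∑ k ∈ Finset.univ.filter (fun k => x ∈ H.e k),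
    H.w k * phiP p ((H.e k).sup' (H.e_nonempty k) u + (H.e k).inf' (H.e_nonempty k) u - 2 * u x)

/-- The indicator vector `𝟙_x ∈ ℝ^V`. -/
def ind [DecidableEq V] (x : V) : V → ℝ := fun z => if z = x then 1 else 0

/-- Euclidean inner product on `ℝ^V`. -/
noncomputable def ip (b u : V → ℝ) : ℝ := ∑ x : V, b x * u x

/-- `B_e = conv {𝟙_{x_i} - 𝟙_{x_j} : x_i, x_j ∈ e}`. -/
def Bset [DecidableEq V] (e : Finset V) : Set (V → ℝ) :=
  convexHull ℝ {b | ∃ xi ∈ e, ∃ xj ∈ e, b = ind xi - ind xj}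

section PhiLemmas

lemma phiP_zero (p : ℝ) : phiP p 0 = 0 := by simp [phiP]

lemma phiP_of_pos {p s : ℝ} (hs : 0 < s) : phiP p s = s ^ (p - 1) := by
  rw [phiP, if_neg hs.ne', abs_of_pos hs]
  nth_rewrite 2 [← Real.rpow_one s]
  rw [← Real.rpow_add hs]
  ring_nf

lemma phiP_neg (p s : ℝ) : phiP p (-s) = - phiP p s := by
  rcases eq_or_ne s 0 with rfl | h
  · simp [phiP]
  · rw [phiP, if_neg (neg_ne_zero.2 h), phiP, if_neg h, abs_neg]; ring

lemma phiP_strictMono {p : ℝ} (hp : 1 < p) : StrictMono (phiP p) := by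
  have key : ∀ s t : ℝ, 0 ≤ s → s < t → phiP p s < phiP p t := by
    intro s t hs hst
    have ht : 0 < t := lt_of_le_of_lt hs hst
    rw [phiP_of_pos ht]
    rcases eq_or_lt_of_le hs with rfl | h
    · rw [phiP_zero]; exact Real.rpow_pos_of_pos ht _
    · rw [phiP_of_pos h]; exact Real.rpow_lt_rpow h.le hst (by linarith)
  intro s t hst
  rcases le_or_gt 0 s with hs | hs
  · exact key s t hs hst
  · rcases le_or_gt t 0 with ht | ht
    · have := key (-t) (-s) (neg_nonneg.2 ht) (by linarith)
      rw [phiP_neg, phiP_neg] at this; linarith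
    · have h1 := key 0 (-s) le_rfl (by linarith)
      rw [phiP_zero, phiP_neg] at h1
      have h2 := key 0 t le_rfl ht
      rw [phiP_zero] at h2
      linarith

lemma phiP_eq_zero_iff {p : ℝ} (hp : 1 < p) {s : ℝ} : phiP p s = 0 ↔ s = 0 := by
  constructor
  · intro h
    by_contra hs
    rcases lt_or_gt_of_ne hs with h1 | h1
    · have := phiP_strictMono hp h1; rw [phiP_zero, h] at this; exact lt_irrefl _ this
    · have := phiP_strictMono hp h1; rw [phiP_zero, h] at this; exact lt_irrefl _ this
  · rintro rfl; exact phiP_zero p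

lemma phiP_nonneg {p : ℝ} (hp : 1 < p) {s : ℝ} (hs : 0 ≤ s) : 0 ≤ phiP p s := by
  have := (phiP_strictMono hp).monotone hs
  rwa [phiP_zero] at this

lemma phiP_nonpos {p : ℝ} (hp : 1 < p) {s : ℝ} (hs : s ≤ 0) : phiP p s ≤ 0 := by
  have := (phiP_strictMono hp).monotone hs
  rwa [phiP_zero] at this

lemma phiP_abs {p : ℝ} (hp : 1 < p) (t : ℝ) : |phiP p t| = |t| ^ (p - 1) := by
  rcases eq_or_ne t 0 with rfl | ht
  · simp [phiP_zero, Real.zero_rpow (by linarith : p - 1 ≠ 0)]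
  · rw [phiP, if_neg ht, abs_mul, abs_of_nonneg (Real.rpow_nonneg (abs_nonneg t) _)]
    nth_rewrite 2 [← Real.rpow_one |t|]
    rw [← Real.rpow_add (abs_pos.2 ht)]
    ring_nf

lemma phiP_continuous {p : ℝ} (hp : 1 < p) : Continuous (phiP p) := by
  rw [continuous_iff_continuousAt]
  intro s
  rcases eq_or_ne s 0 with rfl | hs
  · have hg : Continuous (fun t : ℝ => |t| ^ (p - 1)) :=
      continuous_abs.rpow_const (fun x => Or.inr (by linarith))
    have hg0 : Filter.Tendsto (fun t : ℝ => |t| ^ (p - 1)) (nhds 0) (nhds 0) := by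
      have := hg.tendsto 0
      simpa [Real.zero_rpow (by linarith : p - 1 ≠ 0)] using this
    have : Filter.Tendsto (phiP p) (nhds 0) (nhds 0) :=
      squeeze_zero_norm (fun t => by rw [Real.norm_eq_abs, phiP_abs hp]) hg0
    simpa [ContinuousAt, phiP_zero] using this
  · have h1 : ContinuousAt (fun t : ℝ => |t| ^ (p - 2) * t) s :=
      (continuous_abs.continuousAt.rpow_const (Or.inl (abs_ne_zero.2 hs))).mul continuousAt_id
    apply h1.congr
    filter_upwards [eventually_ne_nhds hs] with t ht
    rw [phiP, if_neg ht]

end PhiLemmas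

section GfunLemmas

set_option linter.unusedSectionVars false

variable [DecidableEq V]

/-- One-variable slice of the p-Laplacian at `x`: value of `L^p_H` at `x` when `u x` is
replaced by `t`. -/
noncomputable def gfun (H : FinHypergraph V m) (p : ℝ) (u : V → ℝ) (x : V) (t : ℝ) : ℝ :=
  ∑ k ∈ Finset.univ.filter (fun k => x ∈ H.e k),
    H.w k * phiP p ((H.e k).sup' (H.e_nonempty k) (Function.update u x t)
      + (H.e k).inf' (H.e_nonempty k) (Function.update u x t) - 2 * t)

lemma LpH_eq_gfun (H : FinHypergraph V m) (p : ℝ) (u : V → ℝ) (x : V) :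
    LpH H p u x = gfun H p u x (u x) := by
  simp [LpH, gfun, Function.update_eq_self]

lemma update_le_update_add {u : V → ℝ} {x : V} {t t' : ℝ} (h : t ≤ t') (z : V) :
    Function.update u x t' z ≤ Function.update u x t z + (t' - t) := by
  rcases eq_or_ne z x with rfl | hz
  · simp
  · simp [Function.update_of_ne hz]; linarith

lemma sup'_update_le {e : Finset V} (he : e.Nonempty) {u : V → ℝ} {x : V} {t t' : ℝ}
    (h : t ≤ t') :
    e.sup' he (Function.update u x t') ≤ e.sup' he (Function.update u x t) + (t' - t) :=
  Finset.sup'_le _ _ fun z hz => (update_le_update_add h z).trans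
    (add_le_add_left (Finset.le_sup' _ hz) _)

lemma inf'_update_le {e : Finset V} (he : e.Nonempty) {u : V → ℝ} {x : V} {t t' : ℝ}
    (h : t ≤ t') :
    e.inf' he (Function.update u x t') ≤ e.inf' he (Function.update u x t) + (t' - t) := by
  obtain ⟨z, hz, hze⟩ := Finset.exists_mem_eq_inf' he (Function.update u x t)
  calc e.inf' he (Function.update u x t') ≤ Function.update u x t' z := Finset.inf'_le _ hz
    _ ≤ Function.update u x t z + (t' - t) := update_le_update_add h z
    _ = e.inf' he (Function.update u x t) + (t' - t) := by rw [← hze]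

lemma sup'_update_eq_max {e : Finset V} (he : e.Nonempty) {x : V} (hx : x ∈ e)
    (hne : (e.erase x).Nonempty) (u : V → ℝ) (t : ℝ) :
    e.sup' he (Function.update u x t) = max t ((e.erase x).sup' hne u) := by
  apply le_antisymm
  · apply Finset.sup'_le
    intro z hz
    rcases eq_or_ne z x with rfl | h
    · simp
    · rw [Function.update_of_ne h]
      exact le_max_of_le_right (Finset.le_sup' _ (Finset.mem_erase.2 ⟨h, hz⟩))
  · apply max_le
    · simpa only [Function.update_self] using Finset.le_sup' (Function.update u x t) hx
    · apply Finset.sup'_le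
      intro z hz
      have h := Finset.le_sup' (Function.update u x t) (Finset.mem_of_mem_erase hz)
      rwa [Function.update_of_ne (Finset.mem_erase.1 hz).1] at h

lemma inf'_update_eq_min {e : Finset V} (he : e.Nonempty) {x : V} (hx : x ∈ e)
    (hne : (e.erase x).Nonempty) (u : V → ℝ) (t : ℝ) :
    e.inf' he (Function.update u x t) = min t ((e.erase x).inf' hne u) := by
  apply le_antisymm
  · apply le_min
    · simpa only [Function.update_self] using Finset.inf'_le (Function.update u x t) hx
    · apply Finset.le_inf'
      intro z hz
      have h := Finset.inf'_le (Function.update u x t) (Finset.mem_of_mem_erase hz)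
      rwa [Function.update_of_ne (Finset.mem_erase.1 hz).1] at h
  · apply Finset.le_inf'
    intro z hz
    rcases eq_or_ne z x with rfl | h
    · simp
    · rw [Function.update_of_ne h]
      exact min_le_of_right_le (Finset.inf'_le _ (Finset.mem_erase.2 ⟨h, hz⟩))

lemma maxmin_strictAnti {A B t t' : ℝ} (hBA : B ≤ A) (h : t < t') :
    max t' A + min t' B - 2 * t' < max t A + min t B - 2 * t := by
  rcases le_total A t with h1 | h1
  · rw [max_eq_left h1, max_eq_left (h1.trans h.le), min_eq_right (hBA.trans h1),
      min_eq_right (hBA.trans (h1.trans h.le))]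
    linarith
  · rw [max_eq_right h1]
    rcases le_total t' A with h2 | h2
    · rw [max_eq_right h2]
      have hlip : min t' B ≤ min t B + (t' - t) := by
        rcases le_total B t with h3 | h3
        · rw [min_eq_right h3]; exact (min_le_right _ _).trans (by linarith)
        · rw [min_eq_left h3]; exact (min_le_left _ _).trans (by linarith)
      linarith
    · rw [max_eq_left h2, min_eq_right (hBA.trans h2)]
      rcases le_total t B with h3 | h3
      · rw [min_eq_left h3]; linarith
      · rw [min_eq_right h3]; linarith

lemma gfun_term_le {p : ℝ} (hp : 1 < p) (H : FinHypergraph V m) (u : V → ℝ) (x : V)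
    {t t' : ℝ} (h : t ≤ t') (k : Fin m) :
    H.w k * phiP p ((H.e k).sup' (H.e_nonempty k) (Function.update u x t')
        + (H.e k).inf' (H.e_nonempty k) (Function.update u x t') - 2 * t')
      ≤ H.w k * phiP p ((H.e k).sup' (H.e_nonempty k) (Function.update u x t)
        + (H.e k).inf' (H.e_nonempty k) (Function.update u x t) - 2 * t) := by
  have h1 := sup'_update_le (H.e_nonempty k) (u := u) (x := x) h
  have h2 := inf'_update_le (H.e_nonempty k) (u := u) (x := x) h
  exact mul_le_mul_of_nonneg_left
    ((phiP_strictMono hp).monotone (by linarith)) (H.w_pos k).le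

lemma gfun_anti {p : ℝ} (hp : 1 < p) (H : FinHypergraph V m) (u : V → ℝ) (x : V)
    {t t' : ℝ} (h : t ≤ t') : gfun H p u x t' ≤ gfun H p u x t :=
  Finset.sum_le_sum fun k _ => gfun_term_le hp H u x h k

/-- `x` belongs to some hyperedge which contains another vertex. -/
def HasPartner (H : FinHypergraph V m) (x : V) : Prop :=
  ∃ k, x ∈ H.e k ∧ ∃ z ∈ H.e k, z ≠ x

lemma gfun_strictAnti {p : ℝ} (hp : 1 < p) (H : FinHypergraph V m) (u : V → ℝ) {x : V}
    (hpart : HasPartner H x) {t t' : ℝ} (h : t < t') : gfun H p u x t' < gfun H p u x t := by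
  obtain ⟨k₀, hx, z, hz, hzx⟩ := hpart
  apply Finset.sum_lt_sum (fun k _ => gfun_term_le hp H u x h.le k)
  refine ⟨k₀, Finset.mem_filter.2 ⟨Finset.mem_univ _, hx⟩, ?_⟩
  have hne : ((H.e k₀).erase x).Nonempty := ⟨z, Finset.mem_erase.2 ⟨hzx, hz⟩⟩
  rw [sup'_update_eq_max (H.e_nonempty k₀) hx hne, sup'_update_eq_max (H.e_nonempty k₀) hx hne,
    inf'_update_eq_min (H.e_nonempty k₀) hx hne, inf'_update_eq_min (H.e_nonempty k₀) hx hne]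
  have hBA : ((H.e k₀).erase x).inf' hne u ≤ ((H.e k₀).erase x).sup' hne u := by
    obtain ⟨w, hw⟩ := hne
    exact (Finset.inf'_le u hw).trans (Finset.le_sup' u hw)
  exact mul_lt_mul_of_pos_left (phiP_strictMono hp (maxmin_strictAnti hBA h)) (H.w_pos k₀)

lemma gfun_continuous {p : ℝ} (hp : 1 < p) (H : FinHypergraph V m) (u : V → ℝ) (x : V) :
    Continuous (gfun H p u x) := by
  apply continuous_finset_sum
  intro k hk
  have hx : x ∈ H.e k := (Finset.mem_filter.1 hk).2
  by_cases hne : ((H.e k).erase x).Nonempty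
  · have : Continuous fun t => (H.e k).sup' (H.e_nonempty k) (Function.update u x t)
        + (H.e k).inf' (H.e_nonempty k) (Function.update u x t) - 2 * t := by
      have heq : (fun t => (H.e k).sup' (H.e_nonempty k) (Function.update u x t)
          + (H.e k).inf' (H.e_nonempty k) (Function.update u x t) - 2 * t)
          = fun t => max t (((H.e k).erase x).sup' hne u)
            + min t (((H.e k).erase x).inf' hne u) - 2 * t := by
        funext t
        rw [sup'_update_eq_max (H.e_nonempty k) hx hne, inf'_update_eq_min (H.e_nonempty k) hx hne]
      rw [heq]
      exact ((continuous_id.max continuous_const).add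
        (continuous_id.min continuous_const)).sub (continuous_const.mul continuous_id)
    exact continuous_const.mul ((phiP_continuous hp).comp this)
  · have hall : ∀ z ∈ H.e k, z = x := by
      intro z hz
      by_contra h
      exact hne ⟨z, Finset.mem_erase.2 ⟨h, hz⟩⟩
    have hS : ∀ t, (H.e k).sup' (H.e_nonempty k) (Function.update u x t) = t := by
      intro t
      apply le_antisymm
      · apply Finset.sup'_le; intro z hz; rw [hall z hz]; simp
      · simpa only [Function.update_self] using Finset.le_sup' (Function.update u x t) hx
    have hI : ∀ t, (H.e k).inf' (H.e_nonempty k) (Function.update u x t) = t := by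
      intro t
      apply le_antisymm
      · simpa only [Function.update_self] using Finset.inf'_le (Function.update u x t) hx
      · apply Finset.le_inf'; intro z hz; rw [hall z hz]; simp
    have : (fun t => H.w k * phiP p ((H.e k).sup' (H.e_nonempty k) (Function.update u x t)
        + (H.e k).inf' (H.e_nonempty k) (Function.update u x t) - 2 * t))
        = fun _ => H.w k * phiP p 0 := by
      funext t; rw [hS, hI]; ring_nf
    rw [this]
    exact continuous_const

end GfunLemmas

section RootLemmas

set_option linter.unusedSectionVars false

variable [DecidableEq V]

lemma gfun_nonneg {p : ℝ} (hp : 1 < p) (H : FinHypergraph V m) {u : V → ℝ} (x : V) {t : ℝ}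
    (h : ∀ z, t ≤ u z) : 0 ≤ gfun H p u x t := by
  apply Finset.sum_nonneg
  intro k hk
  have hx : x ∈ H.e k := (Finset.mem_filter.1 hk).2
  have hI : (H.e k).inf' (H.e_nonempty k) (Function.update u x t) = t := by
    apply le_antisymm
    · simpa only [Function.update_self] using Finset.inf'_le (Function.update u x t) hx
    · apply Finset.le_inf'
      intro z hz
      rcases eq_or_ne z x with rfl | hne
      · simp
      · rw [Function.update_of_ne hne]; exact h z
  have hS : t ≤ (H.e k).sup' (H.e_nonempty k) (Function.update u x t) := by
    simpa only [Function.update_self] using Finset.le_sup' (Function.update u x t) hx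
  exact mul_nonneg (H.w_pos k).le (phiP_nonneg hp (by rw [hI]; linarith))

lemma gfun_nonpos {p : ℝ} (hp : 1 < p) (H : FinHypergraph V m) {u : V → ℝ} (x : V) {t : ℝ}
    (h : ∀ z, u z ≤ t) : gfun H p u x t ≤ 0 := by
  apply Finset.sum_nonpos
  intro k hk
  have hx : x ∈ H.e k := (Finset.mem_filter.1 hk).2
  have hS : (H.e k).sup' (H.e_nonempty k) (Function.update u x t) = t := by
    apply le_antisymm
    · apply Finset.sup'_le
      intro z hz
      rcases eq_or_ne z x with rfl | hne
      · simp
      · rw [Function.update_of_ne hne]; exact h z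
    · simpa only [Function.update_self] using Finset.le_sup' (Function.update u x t) hx
  have hI : (H.e k).inf' (H.e_nonempty k) (Function.update u x t)  ≤ t := by
    simpa only [Function.update_self] using Finset.inf'_le (Function.update u x t) hx
  exact mul_nonpos_of_nonneg_of_nonpos (H.w_pos k).le (phiP_nonpos hp (by rw [hS]; linarith))

lemma exists_root [Nonempty V] {p : ℝ} (hp : 1 < p) (H : FinHypergraph V m) (u : V → ℝ) (x : V) :
    ∃ t, gfun H p u x t = 0 := by
  set t₁ := Finset.univ.inf' Finset.univ_nonempty u with ht₁
  set t₂ := Finset.univ.sup' Finset.univ_nonempty u with ht₂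
  have h12 : t₁ ≤ t₂ := by
    obtain ⟨z⟩ := (inferInstance : Nonempty V)
    exact (Finset.inf'_le u (Finset.mem_univ z)).trans (Finset.le_sup' u (Finset.mem_univ z))
  have h1 : 0 ≤ gfun H p u x t₁ := gfun_nonneg hp H x fun z => Finset.inf'_le u (Finset.mem_univ z)
  have h2 : gfun H p u x t₂ ≤ 0 := gfun_nonpos hp H x fun z => Finset.le_sup' u (Finset.mem_univ z)
  have := intermediate_value_Icc' h12 (gfun_continuous hp H u x).continuousOn
  obtain ⟨t, _, ht⟩ := this ⟨h2, h1⟩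
  exact ⟨t, ht⟩

/-- The unique root of the one-variable slice of the p-Laplacian. -/
noncomputable def rootFun [Nonempty V] {p : ℝ} (hp : 1 < p) (H : FinHypergraph V m)
    (u : V → ℝ) (x : V) : ℝ :=
  (exists_root hp H u x).choose

lemma rootFun_spec [Nonempty V] {p : ℝ} (hp : 1 < p) (H : FinHypergraph V m) (u : V → ℝ) (x : V) :
    gfun H p u x (rootFun hp H u x) = 0 :=
  (exists_root hp H u x).choose_spec

lemma rootFun_le [Nonempty V] {p : ℝ} (hp : 1 < p) (H : FinHypergraph V m) {u : V → ℝ} {x : V}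
    (hpart : HasPartner H x) {t : ℝ} (ht : gfun H p u x t ≤ 0) : rootFun hp H u x ≤ t := by
  by_contra h
  push_neg at h
  have := gfun_strictAnti hp H u hpart h
  rw [rootFun_spec] at this
  linarith

lemma le_rootFun [Nonempty V] {p : ℝ} (hp : 1 < p) (H : FinHypergraph V m) {u : V → ℝ} {x : V}
    (hpart : HasPartner H x) {t : ℝ} (ht : 0 ≤ gfun H p u x t) : t ≤ rootFun hp H u x := by
  by_contra h
  push_neg at h
  have := gfun_strictAnti hp H u hpart h
  rw [rootFun_spec] at this
  linarith

lemma gfun_mono_u {p : ℝ} (hp : 1 < p) (H : FinHypergraph V m) {u v : V → ℝ} (x : V) (t : ℝ)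
    (huv : ∀ z, u z ≤ v z) : gfun H p u x t ≤ gfun H p v x t := by
  apply Finset.sum_le_sum
  intro k hk
  have hupd : ∀ z ∈ H.e k, Function.update u x t z ≤ Function.update v x t z := by
    intro z hz
    rcases eq_or_ne z x with rfl | hne
    · simp
    · rw [Function.update_of_ne hne, Function.update_of_ne hne]; exact huv z
  have h1 : (H.e k).sup' (H.e_nonempty k) (Function.update u x t)
      ≤ (H.e k).sup' (H.e_nonempty k) (Function.update v x t) := Finset.sup'_mono_fun hupd
  have h2 : (H.e k).inf' (H.e_nonempty k) (Function.update u x t)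
      ≤ (H.e k).inf' (H.e_nonempty k) (Function.update v x t) := by
    obtain ⟨z, hz, hze⟩ := Finset.exists_mem_eq_inf' (H.e_nonempty k) (Function.update v x t)
    rw [hze]
    exact (Finset.inf'_le _ hz).trans (hupd z hz)
  exact mul_le_mul_of_nonneg_left ((phiP_strictMono hp).monotone (by linarith)) (H.w_pos k).le

lemma rootFun_mono [Nonempty V] {p : ℝ} (hp : 1 < p) (H : FinHypergraph V m) {u v : V → ℝ} {x : V}
    (hpart : HasPartner H x) (huv : ∀ z, u z ≤ v z) :
    rootFun hp H u x ≤ rootFun hp H v x := by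
  apply le_rootFun hp H hpart
  calc (0:ℝ) = gfun H p u x (rootFun hp H u x) := (rootFun_spec hp H u x).symm
    _ ≤ gfun H p v x (rootFun hp H u x) := gfun_mono_u hp H x _ huv

lemma rootFun_mem [Nonempty V] {p : ℝ} (hp : 1 < p) (H : FinHypergraph V m) {u : V → ℝ} {x : V}
    (hpart : HasPartner H x) {a b : ℝ} (ha : ∀ z, a ≤ u z) (hb : ∀ z, u z ≤ b) :
    rootFun hp H u x ∈ Set.Icc a b :=
  ⟨le_rootFun hp H hpart (gfun_nonneg hp H x ha), rootFun_le hp H hpart (gfun_nonpos hp H x hb)⟩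

end RootLemmas

section Connectivity

set_option linter.unusedSectionVars false

variable [DecidableEq V]

lemma connected_propagate (H : FinHypergraph V m) (hconn : H.Connected) {P : V → Prop}
    (hprop : ∀ z, P z → ∀ k, z ∈ H.e k → ∀ w ∈ H.e k, P w) {z₀ : V} (hz₀ : P z₀) (ℓ : V) :
    P ℓ := by
  obtain ⟨l, ks, h0, hlast, hint⟩ := hconn z₀ ℓ
  have hall : ∀ i : Fin (l + 1), ∀ w ∈ H.e (ks i), P w := by
    intro i
    induction i using Fin.induction with
    | zero => exact hprop z₀ hz₀ _ h0
    | succ i ih =>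
      obtain ⟨w, hw⟩ := hint i
      rw [Finset.mem_inter] at hw
      exact hprop w (ih w hw.1) _ hw.2
  exact hall _ ℓ hlast

lemma hasPartner_of_ne (H : FinHypergraph V m) (hconn : H.Connected) {x ℓ : V} (hne : ℓ ≠ x) :
    HasPartner H x := by
  by_contra h
  unfold HasPartner at h
  push_neg at h
  obtain ⟨l, ks, h0, hlast, hint⟩ := hconn x ℓ
  have hall : ∀ i : Fin (l + 1), x ∈ H.e (ks i) := by
    intro i
    induction i using Fin.induction with
    | zero => exact h0
    | succ i ih =>
      obtain ⟨w, hw⟩ := hint i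
      rw [Finset.mem_inter] at hw
      have := h _ ih w hw.1
      exact this ▸ hw.2
  exact hne (h _ (hall (Fin.last l)) ℓ hlast)

lemma exists_solution (H : FinHypergraph V m) (hconn : H.Connected) {p : ℝ} (hp : 1 < p)
    (L : Finset V) (hL : L.Nonempty) (y : V → ℝ) :
    ∃ u : V → ℝ, (∀ x : V, x ∉ L → LpH H p u x = 0) ∧ ∀ x ∈ L, u x = y x := by
  obtain ⟨ℓ₀, hℓ₀⟩ := hL
  haveI : Nonempty V := ⟨ℓ₀⟩
  set a := L.inf' ⟨ℓ₀, hℓ₀⟩ y with ha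
  set b := L.sup' ⟨ℓ₀, hℓ₀⟩ y with hb
  haveI : Fact (a ≤ b) := ⟨(Finset.inf'_le y hℓ₀).trans (Finset.le_sup' y hℓ₀)⟩
  have hpart : ∀ x : V, x ∉ L → HasPartner H x := fun x hx =>
    hasPartner_of_ne H hconn (fun h => hx (h ▸ hℓ₀))
  let T : (∀ _ : V, Set.Icc a b) → (∀ _ : V, Set.Icc a b) := fun u x =>
    if hxL : x ∈ L then ⟨y x, Finset.inf'_le y hxL, Finset.le_sup' y hxL⟩
    else ⟨rootFun hp H (fun z => (u z : ℝ)) x,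
      rootFun_mem hp H (hpart x hxL) (fun z => (u z).2.1) (fun z => (u z).2.2)⟩
  have hT : Monotone T := by
    intro u v huv x
    by_cases hxL : x ∈ L
    · simp only [T, dif_pos hxL]; exact le_rfl
    · simp only [T, dif_neg hxL]
      exact rootFun_mono hp H (hpart x hxL) (fun z => huv z)
  set u₀ := (⟨T, hT⟩ : (∀ _ : V, Set.Icc a b) →o (∀ _ : V, Set.Icc a b)).lfp with hu₀
  have hfix : T u₀ = u₀ := OrderHom.map_lfp (⟨T, hT⟩ : _ →o _)
  refine ⟨fun x => (u₀ x : ℝ), ?_, ?_⟩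
  · intro x hx
    have h1 : ((T u₀ x : Set.Icc a b) : ℝ) = (u₀ x : ℝ) := by rw [hfix]
    have h2 : ((T u₀ x : Set.Icc a b) : ℝ) = rootFun hp H (fun z => (u₀ z : ℝ)) x := by
      simp only [T, dif_neg hx]
    rw [LpH_eq_gfun]
    have h3 : ((u₀ x : ℝ)) = rootFun hp H (fun z => (u₀ z : ℝ)) x := by
      rw [← h1, h2]
    show gfun H p (fun z => (u₀ z : ℝ)) x ((u₀ x : ℝ)) = 0
    rw [h3]
    exact rootFun_spec hp H _ x
  · intro x hx
    have h1 : ((T u₀ x : Set.Icc a b) : ℝ) = (u₀ x : ℝ) := by rw [hfix]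
    have h2 : ((T u₀ x : Set.Icc a b) : ℝ) = y x := by simp only [T, dif_pos hx]
    show (u₀ x : ℝ) = y x
    rw [← h1, h2]

end Connectivity

section Comparison

set_option linter.unusedSectionVars false

variable [DecidableEq V]

lemma solution_le (H : FinHypergraph V m) (hconn : H.Connected) {p : ℝ} (hp : 1 < p)
    {L : Finset V} (hL : L.Nonempty) {u v : V → ℝ}
    (hu : ∀ x ∉ L, LpH H p u x = 0) (hv : ∀ x ∉ L, LpH H p v x = 0)
    (huv : ∀ x ∈ L, u x = v x) : ∀ x, u x ≤ v x := by
  obtain ⟨ℓ₀, hℓ₀⟩ := hL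
  haveI : Nonempty V := ⟨ℓ₀⟩
  have hVne : (Finset.univ : Finset V).Nonempty := Finset.univ_nonempty
  set c := Finset.univ.sup' hVne (fun z => u z - v z) with hc
  have hle : ∀ z, u z ≤ v z + c := by
    intro z
    have h := Finset.le_sup' (fun z => u z - v z) (Finset.mem_univ z)
    rw [← hc] at h
    exact sub_le_iff_le_add'.1 h
  by_cases hc0 : c ≤ 0
  · intro x; have := hle x; linarith
  push_neg at hc0
  exfalso
  obtain ⟨z₁, _, hz₁⟩ := Finset.exists_mem_eq_sup' hVne (fun z => u z - v z)
  set A : Finset V := Finset.univ.filter (fun z => u z - v z = c) with hA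
  have hAne : A.Nonempty := ⟨z₁, Finset.mem_filter.2 ⟨Finset.mem_univ _, hz₁.symm⟩⟩
  set a := A.sup' hAne u with haa
  set P : V → Prop := fun z => u z - v z = c ∧ u z = a with hP
  obtain ⟨z₀, hz₀A, hz₀⟩ := Finset.exists_mem_eq_sup' hAne u
  have hz₀P : P z₀ := ⟨(Finset.mem_filter.1 hz₀A).2, hz₀.symm⟩
  have hPnotL : ∀ z, P z → z ∉ L := by
    intro z hz hzL
    have h1 := huv z hzL
    have h2 := hz.1
    linarith
  have hprop : ∀ z, P z → ∀ k, z ∈ H.e k → ∀ w ∈ H.e k, P w := by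
    intro z hz k hzk w hwk
    have hzL := hPnotL z hz
    have hu0 := hu z hzL
    have hv0 := hv z hzL
    rw [LpH] at hu0 hv0
    have hsupc : ∀ j, (H.e j).sup' (H.e_nonempty j) u ≤ (H.e j).sup' (H.e_nonempty j) v + c :=
      fun j => Finset.sup'_le _ _ fun w' hw' =>
        (hle w').trans (add_le_add_left (Finset.le_sup' v hw') c)
    have hinfc : ∀ j, (H.e j).inf' (H.e_nonempty j) u ≤ (H.e j).inf' (H.e_nonempty j) v + c := by
      intro j
      obtain ⟨w', hw', hw'e⟩ := Finset.exists_mem_eq_inf' (H.e_nonempty j) v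
      calc (H.e j).inf' (H.e_nonempty j) u ≤ u w' := Finset.inf'_le u hw'
        _ ≤ v w' + c := hle w'
        _ = (H.e j).inf' (H.e_nonempty j) v + c := by rw [hw'e]
    have hzc : u z = v z + c := by have := hz.1; linarith
    have hterm : ∀ j ∈ Finset.univ.filter (fun j => z ∈ H.e j),
        H.w j * phiP p ((H.e j).sup' (H.e_nonempty j) u + (H.e j).inf' (H.e_nonempty j) u - 2 * u z)
        ≤ H.w j * phiP p ((H.e j).sup' (H.e_nonempty j) v + (H.e j).inf' (H.e_nonempty j) v - 2 * v z) := by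
      intro j _
      refine mul_le_mul_of_nonneg_left ((phiP_strictMono hp).monotone ?_) (H.w_pos j).le
      have h1 := hsupc j
      have h2 := hinfc j
      linarith
    have heq := (Finset.sum_eq_sum_iff_of_le hterm).1 (by rw [hu0, hv0])
    have hargeq : ∀ j ∈ Finset.univ.filter (fun j => z ∈ H.e j),
        (H.e j).sup' (H.e_nonempty j) u = (H.e j).sup' (H.e_nonempty j) v + c
        ∧ (H.e j).inf' (H.e_nonempty j) u = (H.e j).inf' (H.e_nonempty j) v + c := by
      intro j hj
      have h1 := heq j hj
      have h2 := mul_left_cancel₀ (H.w_pos j).ne' h1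
      have h3 := (phiP_strictMono hp).injective h2
      have h4 := hsupc j
      have h5 := hinfc j
      constructor <;> linarith
    have hsupa : ∀ j ∈ Finset.univ.filter (fun j => z ∈ H.e j),
        (H.e j).sup' (H.e_nonempty j) u = u z := by
      intro j hj
      have hzj : z ∈ H.e j := (Finset.mem_filter.1 hj).2
      obtain ⟨zk, hzkj, hzke⟩ := Finset.exists_mem_eq_sup' (H.e_nonempty j) u
      have hzkA : zk ∈ A := by
        refine Finset.mem_filter.2 ⟨Finset.mem_univ _, ?_⟩
        have h4 := (hargeq j hj).1
        have h5 : v zk ≤ (H.e j).sup' (H.e_nonempty j) v := Finset.le_sup' v hzkj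
        have h6 := hle zk
        have h7 : u zk = (H.e j).sup' (H.e_nonempty j) u := hzke.symm
        linarith
      have h8 : u zk ≤ a := Finset.le_sup' u hzkA
      have h9 : u z ≤ (H.e j).sup' (H.e_nonempty j) u := Finset.le_sup' u hzj
      have h10 : u z = a := hz.2
      rw [hzke]
      linarith
    have hzero : ∀ j ∈ Finset.univ.filter (fun j => z ∈ H.e j),
        H.w j * phiP p ((H.e j).sup' (H.e_nonempty j) u + (H.e j).inf' (H.e_nonempty j) u
          - 2 * u z) = 0 := by
      have hnonpos : ∀ j ∈ Finset.univ.filter (fun j => z ∈ H.e j),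
          H.w j * phiP p ((H.e j).sup' (H.e_nonempty j) u + (H.e j).inf' (H.e_nonempty j) u
            - 2 * u z) ≤ 0 := by
        intro j hj
        have h9 := hsupa j hj
        have h10 : (H.e j).inf' (H.e_nonempty j) u ≤ u z :=
          Finset.inf'_le u (Finset.mem_filter.1 hj).2
        exact mul_nonpos_of_nonneg_of_nonpos (H.w_pos j).le (phiP_nonpos hp (by linarith))
      intro j hj
      have hsum0 : ∑ j ∈ Finset.univ.filter (fun j => z ∈ H.e j),
          -(H.w j * phiP p ((H.e j).sup' (H.e_nonempty j) u + (H.e j).inf' (H.e_nonempty j) u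
            - 2 * u z)) = 0 := by
        rw [Finset.sum_neg_distrib, hu0, neg_zero]
      have h11 := (Finset.sum_eq_zero_iff_of_nonneg
        (fun j hj => neg_nonneg.2 (hnonpos j hj))).1 hsum0 j hj
      linarith
    have hkf : k ∈ Finset.univ.filter (fun j => z ∈ H.e j) :=
      Finset.mem_filter.2 ⟨Finset.mem_univ _, hzk⟩
    have h11 : phiP p ((H.e k).sup' (H.e_nonempty k) u + (H.e k).inf' (H.e_nonempty k) u
        - 2 * u z) = 0 :=
      (mul_eq_zero.1 (hzero k hkf)).resolve_left (H.w_pos k).ne'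
    have h12 := (phiP_eq_zero_iff hp).1 h11
    have hsu := hsupa k hkf
    have hiu : (H.e k).inf' (H.e_nonempty k) u = u z := by linarith
    have hwle : u w ≤ (H.e k).sup' (H.e_nonempty k) u := Finset.le_sup' u hwk
    have hwge : (H.e k).inf' (H.e_nonempty k) u ≤ u w := Finset.inf'_le u hwk
    have huw : u w = a := by have := hz.2; linarith
    have h13 := (hargeq k hkf).1
    have h14 := (hargeq k hkf).2
    have h15 : v w ≤ (H.e k).sup' (H.e_nonempty k) v := Finset.le_sup' v hwk
    have h16 : (H.e k).inf' (H.e_nonempty k) v ≤ v w := Finset.inf'_le v hwk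
    have h17 : u z = a := hz.2
    exact ⟨by linarith, huw⟩
  exact hPnotL ℓ₀ (connected_propagate H hconn hprop hz₀P ℓ₀) hℓ₀

lemma max_principle (H : FinHypergraph V m) (hconn : H.Connected) {p : ℝ} (hp : 1 < p)
    {L : Finset V} (hL : L.Nonempty) {u : V → ℝ}
    (hu : ∀ x ∉ L, LpH H p u x = 0) : ∀ x, u x ≤ L.sup' hL u := by
  have hL' := hL
  obtain ⟨ℓ₀, hℓ₀⟩ := hL'
  haveI : Nonempty V := ⟨ℓ₀⟩
  have hVne : (Finset.univ : Finset V).Nonempty := Finset.univ_nonempty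
  set M := Finset.univ.sup' hVne u with hM
  by_cases hML : ∃ ℓ ∈ L, u ℓ = M
  · obtain ⟨ℓ, hℓ, hMe⟩ := hML
    intro x
    calc u x ≤ M := Finset.le_sup' u (Finset.mem_univ x)
      _ = u ℓ := hMe.symm
      _ ≤ L.sup' hL u := Finset.le_sup' u hℓ
  · exfalso
    push_neg at hML
    set P : V → Prop := fun z => u z = M with hP
    obtain ⟨z₀, _, hz₀⟩ := Finset.exists_mem_eq_sup' hVne u
    have hz₀P : P z₀ := hz₀.symm
    have hprop : ∀ z, P z → ∀ k, z ∈ H.e k → ∀ w ∈ H.e k, P w := by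
      intro z hz k hzk w hwk
      have hzL : z ∉ L := fun h => hML z h hz
      have hu0 := hu z hzL
      rw [LpH] at hu0
      have hsupM : ∀ j ∈ Finset.univ.filter (fun j => z ∈ H.e j),
          (H.e j).sup' (H.e_nonempty j) u = M := by
        intro j hj
        have hzj : z ∈ H.e j := (Finset.mem_filter.1 hj).2
        apply le_antisymm
        · exact Finset.sup'_le _ _ fun w' _ => Finset.le_sup' u (Finset.mem_univ w')
        · have := Finset.le_sup' u hzj
          rw [hz] at this
          exact this
      have hzero : ∀ j ∈ Finset.univ.filter (fun j => z ∈ H.e j),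
          H.w j * phiP p ((H.e j).sup' (H.e_nonempty j) u + (H.e j).inf' (H.e_nonempty j) u
            - 2 * u z) = 0 := by
        have hnonpos : ∀ j ∈ Finset.univ.filter (fun j => z ∈ H.e j),
            H.w j * phiP p ((H.e j).sup' (H.e_nonempty j) u + (H.e j).inf' (H.e_nonempty j) u
              - 2 * u z) ≤ 0 := by
          intro j hj
          have h9 := hsupM j hj
          have h10 : (H.e j).inf' (H.e_nonempty j) u ≤ u z :=
            Finset.inf'_le u (Finset.mem_filter.1 hj).2
          have h11 : u z = M := hz
          exact mul_nonpos_of_nonneg_of_nonpos (H.w_pos j).le (phiP_nonpos hp (by linarith))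
        intro j hj
        have hsum0 : ∑ j ∈ Finset.univ.filter (fun j => z ∈ H.e j),
            -(H.w j * phiP p ((H.e j).sup' (H.e_nonempty j) u + (H.e j).inf' (H.e_nonempty j) u
              - 2 * u z)) = 0 := by
          rw [Finset.sum_neg_distrib, hu0, neg_zero]
        have h11 := (Finset.sum_eq_zero_iff_of_nonneg
          (fun j hj => neg_nonneg.2 (hnonpos j hj))).1 hsum0 j hj
        linarith
      have hkf : k ∈ Finset.univ.filter (fun j => z ∈ H.e j) :=
        Finset.mem_filter.2 ⟨Finset.mem_univ _, hzk⟩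
      have h11 : phiP p ((H.e k).sup' (H.e_nonempty k) u + (H.e k).inf' (H.e_nonempty k) u
          - 2 * u z) = 0 :=
        (mul_eq_zero.1 (hzero k hkf)).resolve_left (H.w_pos k).ne'
      have h12 := (phiP_eq_zero_iff hp).1 h11
      have hsu := hsupM k hkf
      have h13 : u z = M := hz
      have hiu : (H.e k).inf' (H.e_nonempty k) u = M := by linarith
      have hwle : u w ≤ (H.e k).sup' (H.e_nonempty k) u := Finset.le_sup' u hwk
      have hwge : (H.e k).inf' (H.e_nonempty k) u ≤ u w := Finset.inf'_le u hwk
      show u w = M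
      linarith
    exact hML ℓ₀ hℓ₀ (connected_propagate H hconn hprop hz₀P ℓ₀)

lemma sup'_neg_eq {s : Finset V} (hs : s.Nonempty) (f : V → ℝ) :
    s.sup' hs (fun z => -f z) = - s.inf' hs f := by
  apply le_antisymm
  · exact Finset.sup'_le _ _ fun z hz => neg_le_neg (Finset.inf'_le f hz)
  · obtain ⟨z, hz, hze⟩ := Finset.exists_mem_eq_inf' hs f
    rw [hze]
    exact Finset.le_sup' (fun z => -f z) hz

lemma inf'_neg_eq {s : Finset V} (hs : s.Nonempty) (f : V → ℝ) :
    s.inf' hs (fun z => -f z) = - s.sup' hs f := by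
  apply le_antisymm
  · obtain ⟨z, hz, hze⟩ := Finset.exists_mem_eq_sup' hs f
    rw [hze]
    exact Finset.inf'_le (fun z => -f z) hz
  · exact Finset.le_inf' _ _ fun z hz => neg_le_neg (Finset.le_sup' f hz)

lemma LpH_neg (H : FinHypergraph V m) (p : ℝ) (u : V → ℝ) (x : V) :
    LpH H p (fun z => -u z) x = - LpH H p u x := by
  rw [LpH, LpH, ← Finset.sum_neg_distrib]
  apply Finset.sum_congr rfl
  intro k _
  rw [sup'_neg_eq (H.e_nonempty k) u, inf'_neg_eq (H.e_nonempty k) u,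
    show -(H.e k).inf' (H.e_nonempty k) u + -(H.e k).sup' (H.e_nonempty k) u - 2 * -u x
      = -((H.e k).sup' (H.e_nonempty k) u + (H.e k).inf' (H.e_nonempty k) u - 2 * u x) by ring,
    phiP_neg]
  ring

lemma min_principle (H : FinHypergraph V m) (hconn : H.Connected) {p : ℝ} (hp : 1 < p)
    {L : Finset V} (hL : L.Nonempty) {u : V → ℝ}
    (hu : ∀ x ∉ L, LpH H p u x = 0) : ∀ x, L.inf' hL u ≤ u x := by
  have h := max_principle H hconn hp hL (u := fun z => -u z)
    (fun x hx => by rw [LpH_neg, hu x hx, neg_zero])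
  intro x
  have hx := h x
  rw [sup'_neg_eq hL u] at hx
  have hx' : -u x ≤ -L.inf' hL u := hx
  linarith

end Comparison


/-- the simplified hypergraph p-Laplacian equation admits a unique solution,
and this solution takes values between the smallest and the largest label. -/
theorem pLaplacian_equation_wellposed [DecidableEq V] (H : FinHypergraph V m)
    (hconn : H.Connected) (p : ℝ) (hp : 1 < p) (L : Finset V) (hL : L.Nonempty) (y : V → ℝ) :
    (∃! u : V → ℝ, (∀ x : V, x ∉ L → LpH H p u x = 0) ∧ ∀ x ∈ L, u x = y x) ∧
    ∀ u : V → ℝ, ((∀ x : V, x ∉ L → LpH H p u x = 0) ∧ ∀ x ∈ L, u x = y x) →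
      ∀ x : V, L.inf' hL y ≤ u x ∧ u x ≤ L.sup' hL y := by
  obtain ⟨u, hu1, hu2⟩ := exists_solution H hconn hp L hL y
  constructor
  · refine ⟨u, ⟨hu1, hu2⟩, ?_⟩
    rintro v ⟨hv1, hv2⟩
    have h1 : ∀ x, v x ≤ u x := solution_le H hconn hp hL hv1 hu1
      (fun x hx => by rw [hv2 x hx, hu2 x hx])
    have h2 : ∀ x, u x ≤ v x := solution_le H hconn hp hL hu1 hv1
      (fun x hx => by rw [hv2 x hx, hu2 x hx])
    funext x
    exact le_antisymm (h1 x) (h2 x)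
  · rintro w ⟨hw1, hw2⟩ x
    have hinfeq : L.inf' hL w = L.inf' hL y := Finset.inf'_congr hL rfl (fun z hz => hw2 z hz)
    have hsupeq : L.sup' hL w = L.sup' hL y := Finset.sup'_congr hL rfl (fun z hz => hw2 z hz)
    constructor
    · have h := min_principle H hconn hp hL hw1 x
      rwa [hinfeq] at h
    · have h := max_principle H hconn hp hL hw1 x
      rwa [hsupeq] at h
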